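/- arXiv:1405.2067 — 3 statements merged into one kernel-verified Lean document; each statement's English description precedes it below -/
import Mathlib

section
/- Let (W, μ) be a probability space, (ξ_i)_{i∈ℕ} an increasing sequence of ℕ∪{∞}-valued random variables with ξ_0 = 0, and (𝓕_i)_{i∈ℕ} a filtration of sub-σ-algebras such that ξ_i is 𝓕_i-measurable. Suppose there exist ϑ₀ > 0 and C₀ ≥ 1 such that μ(ξ_i − ξ_{i−1} ≥ q | 𝓕_{i−1}) ≤ C₀ e^{−q ϑ₀} almost surely for all integers q, i ≥ 1. Then for every ε > 0 there exist Q > 0 and ϑ > 0 such that for every positive integer n, μ({w : (1/n) Σ_{i=1}^n 𝟙_Q(ξ_i(w) − ξ_{i−1}(w)) ≥ ε}) ≤ e^{−ϑ n}, where 𝟙_Q(q) = q if q ≥ Q and 𝟙_Q(q) = 0 otherwise. -/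
open MeasureTheory Filter

/-- Truncation `𝟙_Q` on `ℕ∞`, viewed as a real number: `𝟙_Q(q) = q` if `q ≥ Q`, else `0`. -/
noncomputable def truncQ (Q : ℕ) (q : ℕ∞) : ℝ :=
  if (Q : ℕ∞) ≤ q then (q.toNat : ℝ) else 0

lemma truncQ_nonneg (Q : ℕ) (x : ℕ∞) : 0 ≤ truncQ Q x := by
  unfold truncQ; split <;> positivity

lemma truncQ_eq_nat (Q : ℕ) (x : ℕ∞) : ∃ k : ℕ, truncQ Q x = (k : ℝ) := by
  unfold truncQ; split
  · exact ⟨x.toNat, rfl⟩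
  · exact ⟨0, by simp⟩

lemma truncQ_le_imp {Q q : ℕ} {a b : ℕ∞} (hq : 1 ≤ q)
    (h : (q : ℝ) ≤ truncQ Q (a - b)) : b + ((max q Q : ℕ) : ℕ∞) ≤ a := by
  unfold truncQ at h
  split at h
  · rename_i hQ
    have htop : a - b ≠ ⊤ := by
      intro ht
      rw [ht] at h
      simp at h
      omega
    have hqd : (q : ℕ∞) ≤ a - b := by
      have : (q : ℝ) ≤ ((a-b).toNat : ℝ) := h
      have hq' : q ≤ (a-b).toNat := by exact_mod_cast this
      calc (q : ℕ∞) ≤ ((a-b).toNat : ℕ∞) := by exact_mod_cast hq'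
        _ = a - b := ENat.coe_toNat htop
    -- now b + max q Q ≤ a
    cases b with
    | top =>
        exfalso
        have : a - ⊤ = 0 := tsub_eq_zero_of_le le_top
        rw [this] at hqd
        have : q = 0 := by simpa using hqd
        omega
    | coe b' =>
        cases a with
        | top => exact le_top
        | coe a' =>
            have hsub : (a' : ℕ∞) - (b' : ℕ∞) = ((a' - b' : ℕ) : ℕ∞) := by
              exact_mod_cast rfl
            rw [hsub] at hqd hQ
            have h1 : q ≤ a' - b' := by exact_mod_cast hqd
            have h2 : Q ≤ a' - b' := by exact_mod_cast hQ
            have : b' + max q Q ≤ a' := by omega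
            rw [← Nat.cast_add]
            exact_mod_cast this
  · exfalso
    have : (q:ℝ) ≤ 0 := h
    have : q = 0 := by exact_mod_cast le_antisymm this (by positivity)
    omega

lemma numericBound (ϑ₀ C₀ : ℝ) (hϑ₀ : 0 < ϑ₀) (hC₀ : 0 ≤ C₀) (Q B : ℕ) :
    ∑ q ∈ Finset.range B,
      (Real.exp (ϑ₀/2 * (q+1)) - Real.exp (ϑ₀/2 * q)) *
        (C₀ * Real.exp (-((max (q+1) Q : ℕ) : ℝ) * ϑ₀))
      ≤ C₀ * (1 - Real.exp (-(ϑ₀/4)))⁻¹ * Real.exp (-(ϑ₀/4)) ^ Q := by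
  set s : ℝ := Real.exp (-(ϑ₀/4)) with hs
  have hs0 : 0 < s := Real.exp_pos _
  have hs1 : s < 1 := Real.exp_lt_one_iff.mpr (by linarith)
  have hterm : ∀ q : ℕ,
      (Real.exp (ϑ₀/2 * (q+1)) - Real.exp (ϑ₀/2 * q)) *
        (C₀ * Real.exp (-((max (q+1) Q : ℕ) : ℝ) * ϑ₀))
      ≤ C₀ * (s ^ Q * s ^ (q+1)) := by
    intro q
    set r : ℝ := ((max (q+1) Q : ℕ) : ℝ) with hr
    have hr1 : (q : ℝ) + 1 ≤ r := by
      rw [hr]; exact_mod_cast Nat.le_max_left (q+1) Q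
    have hr2 : (Q : ℝ) ≤ r := by
      rw [hr]; exact_mod_cast Nat.le_max_right (q+1) Q
    have h1 : (Real.exp (ϑ₀/2 * (q+1)) - Real.exp (ϑ₀/2 * q)) *
        (C₀ * Real.exp (-r * ϑ₀))
        ≤ Real.exp (ϑ₀/2 * (q+1)) * (C₀ * Real.exp (-r * ϑ₀)) := by
      apply mul_le_mul_of_nonneg_right _ (by positivity)
      have := Real.exp_pos (ϑ₀/2 * q)
      linarith
    have h2 : Real.exp (ϑ₀/2 * (q+1)) * (C₀ * Real.exp (-r * ϑ₀))
        = C₀ * Real.exp (ϑ₀/2 * (q+1) + (-r * ϑ₀)) := by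
      rw [Real.exp_add]; ring
    have h3 : Real.exp (ϑ₀/2 * (q+1) + (-r * ϑ₀))
        ≤ Real.exp (-(ϑ₀/4) * ((q+1) + Q)) := by
      apply Real.exp_le_exp.mpr
      nlinarith
    have h4 : Real.exp (-(ϑ₀/4) * ((q+1) + Q)) = s ^ Q * s ^ (q+1) := by
      rw [hs, ← Real.exp_nat_mul, ← Real.exp_nat_mul, ← Real.exp_add]
      congr 1
      push_cast
      ring
    calc (Real.exp (ϑ₀/2 * (q+1)) - Real.exp (ϑ₀/2 * q)) *
        (C₀ * Real.exp (-r * ϑ₀))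
        ≤ C₀ * Real.exp (ϑ₀/2 * (q+1) + (-r * ϑ₀)) := by rw [← h2]; exact h1
      _ ≤ C₀ * Real.exp (-(ϑ₀/4) * ((q+1) + Q)) := by
          exact mul_le_mul_of_nonneg_left h3 hC₀
      _ = C₀ * (s ^ Q * s ^ (q+1)) := by rw [h4]
  calc ∑ q ∈ Finset.range B, (Real.exp (ϑ₀/2 * (q+1)) - Real.exp (ϑ₀/2 * q)) *
        (C₀ * Real.exp (-((max (q+1) Q : ℕ) : ℝ) * ϑ₀))
      ≤ ∑ q ∈ Finset.range B, C₀ * (s ^ Q * s ^ (q+1)) :=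
        Finset.sum_le_sum fun q _ => hterm q
    _ = C₀ * s ^ Q * ∑ q ∈ Finset.range B, s ^ (q+1) := by
        rw [Finset.mul_sum]; exact Finset.sum_congr rfl fun q _ => by ring
    _ ≤ C₀ * s ^ Q * (1 - s)⁻¹ := by
        apply mul_le_mul_of_nonneg_left _ (by positivity)
        calc ∑ q ∈ Finset.range B, s ^ (q+1)
            ≤ ∑ q ∈ Finset.range B, s ^ q :=
              Finset.sum_le_sum fun q _ =>
                pow_le_pow_of_le_one hs0.le hs1.le (Nat.le_succ q)
          _ ≤ ∑' q : ℕ, s ^ q :=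
              Summable.sum_le_tsum _ (fun q _ => by positivity)
                (summable_geometric_of_lt_one hs0.le hs1)
          _ = (1 - s)⁻¹ := tsum_geometric_of_lt_one hs0.le hs1
    _ = C₀ * (1 - s)⁻¹ * s ^ Q := by ring

lemma measurable_truncQ_sub {W : Type*} {m : MeasurableSpace W} {ξ η : W → ℕ∞}
    (hξ : Measurable[m] ξ) (hη : Measurable[m] η) (Q : ℕ) :
    Measurable[m] fun w => truncQ Q (ξ w - η w) :=
  (Measurable.of_discrete (f := fun p : ℕ∞ × ℕ∞ => truncQ Q (p.1 - p.2))).comp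
    (hξ.prodMk hη)

lemma stepBound {W : Type*} [m0 : MeasurableSpace W] (μ : Measure W) [IsProbabilityMeasure μ]
    (ξ : ℕ → W → ℕ∞) (𝓕 : ℕ → MeasurableSpace W)
    (hle : ∀ i, 𝓕 i ≤ m0) (hmono : Monotone 𝓕)
    (hmeas : ∀ i, Measurable[𝓕 i] (ξ i))
    (ϑ₀ C₀ : ℝ) (hϑ₀ : 0 < ϑ₀) (hC₀ : 1 ≤ C₀)
    (hcond : ∀ i q : ℕ, 1 ≤ i → 1 ≤ q →
      ∀ᵐ w ∂μ,
        (μ[Set.indicator {w | ξ (i - 1) w + (q : ℕ∞) ≤ ξ i w} (fun _ => (1 : ℝ)) | 𝓕 (i - 1)]) w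
          ≤ C₀ * Real.exp (-(q : ℝ) * ϑ₀))
    (Q B i : ℕ) (hi : 1 ≤ i) :
    ∀ᵐ w ∂μ,
      (μ[(fun w => Real.exp (ϑ₀/2 * min (truncQ Q (ξ i w - ξ (i-1) w)) B)) | 𝓕 (i-1)]) w
        ≤ 1 + C₀ * (1 - Real.exp (-(ϑ₀/4)))⁻¹ * Real.exp (-(ϑ₀/4)) ^ Q := by
  set g : W → ℝ := fun w => Real.exp (ϑ₀/2 * min (truncQ Q (ξ i w - ξ (i-1) w)) B) with hg
  set c : ℕ → ℝ := fun q => Real.exp (ϑ₀/2 * (q+1)) - Real.exp (ϑ₀/2 * q) with hc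
  set A : ℕ → Set W := fun q => {w | ξ (i-1) w + ((max (q+1) Q : ℕ) : ℕ∞) ≤ ξ i w} with hA
  set ind : ℕ → W → ℝ := fun q => (A q).indicator (fun _ => (1:ℝ)) with hind
  set h : W → ℝ := (fun _ => (1:ℝ)) + ∑ q ∈ Finset.range B, c q • ind q with hh
  have hc0 : ∀ q : ℕ, 0 ≤ c q := by
    intro q
    have : ϑ₀/2 * q ≤ ϑ₀/2 * (q+1) := by nlinarith [Nat.cast_nonneg (α := ℝ) q]
    simpa [hc, sub_nonneg] using Real.exp_le_exp.mpr this
  have hind01 : ∀ q w, 0 ≤ ind q w ∧ ind q w ≤ 1 := by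
    intro q w
    by_cases hw : w ∈ A q <;> simp [hind, Set.indicator_of_mem, Set.indicator_of_notMem, hw]
  have hAmeas : ∀ q, MeasurableSet (A q) := by
    intro q
    have hp : Measurable fun w => (ξ (i-1) w, ξ i w) :=
      ((hmeas (i-1)).mono (hle _) le_rfl).prodMk ((hmeas i).mono (hle _) le_rfl)
    exact hp (MeasurableSet.of_discrete
      (s := {p : ℕ∞ × ℕ∞ | p.1 + ((max (q+1) Q : ℕ) : ℕ∞) ≤ p.2}))
  have hind_int : ∀ q, Integrable (ind q) μ := fun q =>
    (integrable_const (1:ℝ)).indicator (hAmeas q)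
  have hsum_fn : (∑ q ∈ Finset.range B, c q • ind q) =
      fun a => ∑ q ∈ Finset.range B, (c q • ind q) a := by
    ext a; simp [Finset.sum_apply]
  have hS_int : Integrable (∑ q ∈ Finset.range B, c q • ind q) μ := by
    rw [hsum_fn]; exact integrable_finset_sum _ fun q _ => (hind_int q).smul (c q)
  have hh_int : Integrable h μ := (integrable_const (1:ℝ)).add hS_int
  have hXm : Measurable[𝓕 i] fun w => truncQ Q (ξ i w - ξ (i-1) w) :=
    measurable_truncQ_sub (hmeas i) ((hmeas (i-1)).mono (hmono (Nat.sub_le i 1)) le_rfl) Q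
  have hgm : Measurable g :=
    Real.measurable_exp.comp
      (measurable_const.mul (((hXm.mono (hle i) le_rfl)).min measurable_const))
  have hg_int : Integrable g μ := by
    refine Integrable.mono' (integrable_const (Real.exp (ϑ₀/2 * B)))
      hgm.aestronglyMeasurable (ae_of_all _ fun w => ?_)
    rw [Real.norm_eq_abs, abs_of_pos (Real.exp_pos _)]
    apply Real.exp_le_exp.mpr
    apply mul_le_mul_of_nonneg_left (min_le_right _ _) (by positivity)
  -- pointwise bound g ≤ h
  have hgh : ∀ w, g w ≤ h w := by
    intro w
    obtain ⟨k, hk⟩ := truncQ_eq_nat Q (ξ i w - ξ (i-1) w)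
    set m : ℕ := min k B with hm
    have hminc : min (truncQ Q (ξ i w - ξ (i-1) w)) (B:ℝ) = (m:ℝ) := by
      rw [hk, hm]; norm_cast
    have htel : ∑ q ∈ Finset.range m, c q = Real.exp (ϑ₀/2 * m) - 1 := by
      have := Finset.sum_range_sub (fun q : ℕ => Real.exp (ϑ₀/2 * q)) m
      simp only [hc]
      rw [show (∑ q ∈ Finset.range m, (Real.exp (ϑ₀/2 * (q+1)) - Real.exp (ϑ₀/2 * q)))
          = ∑ q ∈ Finset.range m, (Real.exp (ϑ₀/2 * ((q+1:ℕ):ℝ)) - Real.exp (ϑ₀/2 * q)) from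
        Finset.sum_congr rfl fun q _ => by push_cast; ring_nf]
      rw [this]
      simp
    have hindeq : ∀ q ∈ Finset.range m, c q = c q * ind q w := by
      intro q hq
      have hqm : q + 1 ≤ m := Finset.mem_range.mp hq
      have hqk : ((q+1 : ℕ) : ℝ) ≤ truncQ Q (ξ i w - ξ (i-1) w) := by
        rw [hk]
        exact_mod_cast hqm.trans (min_le_left k B)
      have hmem : w ∈ A q := truncQ_le_imp (Nat.le_add_left 1 q) hqk
      rw [hind]
      simp [Set.indicator_of_mem hmem]
    have hle2 : ∑ q ∈ Finset.range m, c q ≤ ∑ q ∈ Finset.range B, c q * ind q w := by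
      rw [Finset.sum_congr rfl hindeq]
      apply Finset.sum_le_sum_of_subset_of_nonneg
        (Finset.range_subset_range.mpr (min_le_right k B))
      intro q _ _
      exact mul_nonneg (hc0 q) (hind01 q w).1
    have hhw : h w = 1 + ∑ q ∈ Finset.range B, c q * ind q w := by
      simp [hh, Finset.sum_apply, smul_eq_mul]
    rw [hg, hhw]
    simp only [hminc]
    linarith [htel, hle2]
  -- conditional expectation computation
  have h1 : μ[g | 𝓕 (i-1)] ≤ᵐ[μ] μ[h | 𝓕 (i-1)] :=
    condExp_mono hg_int hh_int (ae_of_all _ hgh)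
  have h2 : μ[h | 𝓕 (i-1)] =ᵐ[μ]
      (fun _ => (1:ℝ)) + ∑ q ∈ Finset.range B, c q • μ[ind q | 𝓕 (i-1)] := by
    refine (condExp_add (integrable_const 1) hS_int _).trans ?_
    have e1 : μ[(fun _ => (1:ℝ)) | 𝓕 (i-1)] = fun _ => (1:ℝ) := condExp_const (hle _) 1
    have e2 : μ[∑ q ∈ Finset.range B, c q • ind q | 𝓕 (i-1)] =ᵐ[μ]
        ∑ q ∈ Finset.range B, c q • μ[ind q | 𝓕 (i-1)] := by
      refine EventuallyEq.trans ?_ (EventuallyEq.refl _ _)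
      refine (condExp_finsetSum (fun q _ => (hind_int q).smul (c q)) _).trans ?_
      have : ∀ q ∈ Finset.range B,
          μ[c q • ind q | 𝓕 (i-1)] =ᵐ[μ] c q • μ[ind q | 𝓕 (i-1)] :=
        fun q _ => condExp_smul (c q) (ind q) _
      -- combine finitely many a.e. equalities
      have hall : ∀ᵐ w ∂μ, ∀ q ∈ Finset.range B,
          (μ[c q • ind q | 𝓕 (i-1)]) w = (c q • μ[ind q | 𝓕 (i-1)]) w :=
        (eventually_all_finset _).mpr this
      filter_upwards [hall] with w hw
      simp only [Finset.sum_apply]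
      exact Finset.sum_congr rfl hw
    filter_upwards [e2] with w hw
    simp only [Pi.add_apply, e1, hw]
  have h3 : ∀ᵐ w ∂μ, ∀ q ∈ Finset.range B,
      (μ[ind q | 𝓕 (i-1)]) w ≤ C₀ * Real.exp (-((max (q+1) Q : ℕ) : ℝ) * ϑ₀) := by
    refine (eventually_all_finset _).mpr fun q _ => ?_
    exact hcond i (max (q+1) Q) hi (le_trans (Nat.le_add_left 1 q) (Nat.le_max_left _ _))
  filter_upwards [h1, h2, h3] with w hw1 hw2 hw3
  have hsum : ∑ q ∈ Finset.range B, c q * (μ[ind q | 𝓕 (i-1)]) w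
      ≤ ∑ q ∈ Finset.range B,
          (Real.exp (ϑ₀/2 * (q+1)) - Real.exp (ϑ₀/2 * q)) *
            (C₀ * Real.exp (-((max (q+1) Q : ℕ) : ℝ) * ϑ₀)) :=
    Finset.sum_le_sum fun q hq =>
      mul_le_mul_of_nonneg_left (hw3 q hq) (hc0 q)
  calc (μ[g | 𝓕 (i-1)]) w ≤ (μ[h | 𝓕 (i-1)]) w := hw1
    _ = 1 + ∑ q ∈ Finset.range B, c q * (μ[ind q | 𝓕 (i-1)]) w := by
        rw [hw2]; simp [Finset.sum_apply, smul_eq_mul]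
    _ ≤ 1 + C₀ * (1 - Real.exp (-(ϑ₀/4)))⁻¹ * Real.exp (-(ϑ₀/4)) ^ Q := by
        have := numericBound ϑ₀ C₀ hϑ₀ (by linarith) Q B
        linarith

lemma prodBound {W : Type*} [m0 : MeasurableSpace W] (μ : Measure W) [IsProbabilityMeasure μ]
    (ξ : ℕ → W → ℕ∞) (𝓕 : ℕ → MeasurableSpace W)
    (hle : ∀ i, 𝓕 i ≤ m0) (hmono : Monotone 𝓕)
    (hmeas : ∀ i, Measurable[𝓕 i] (ξ i))
    (ϑ₀ C₀ : ℝ) (hϑ₀ : 0 < ϑ₀) (hC₀ : 1 ≤ C₀)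
    (hcond : ∀ i q : ℕ, 1 ≤ i → 1 ≤ q →
      ∀ᵐ w ∂μ,
        (μ[Set.indicator {w | ξ (i - 1) w + (q : ℕ∞) ≤ ξ i w} (fun _ => (1 : ℝ)) | 𝓕 (i - 1)]) w
          ≤ C₀ * Real.exp (-(q : ℝ) * ϑ₀))
    (Q B : ℕ) (n : ℕ) :
    Integrable (fun w => ∏ i ∈ Finset.Icc 1 n,
        Real.exp (ϑ₀/2 * min (truncQ Q (ξ i w - ξ (i-1) w)) B)) μ ∧
    ∫ w, (∏ i ∈ Finset.Icc 1 n,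
        Real.exp (ϑ₀/2 * min (truncQ Q (ξ i w - ξ (i-1) w)) B)) ∂μ
      ≤ (1 + C₀ * (1 - Real.exp (-(ϑ₀/4)))⁻¹ * Real.exp (-(ϑ₀/4)) ^ Q) ^ n := by
  set δ : ℝ := C₀ * (1 - Real.exp (-(ϑ₀/4)))⁻¹ * Real.exp (-(ϑ₀/4)) ^ Q with hδ
  have hs1 : Real.exp (-(ϑ₀/4)) < 1 := Real.exp_lt_one_iff.mpr (by linarith)
  have hδ0 : 0 ≤ δ := by
    apply mul_nonneg (mul_nonneg (by linarith) _) (by positivity)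
    rw [inv_nonneg]
    linarith
  set g : ℕ → W → ℝ := fun i w => Real.exp (ϑ₀/2 * min (truncQ Q (ξ i w - ξ (i-1) w)) B)
    with hgdef
  have hg1 : ∀ i w, 1 ≤ g i w := by
    intro i w
    rw [hgdef]
    rw [show (1:ℝ) = Real.exp 0 from (Real.exp_zero).symm]
    apply Real.exp_le_exp.mpr
    have h1 : (0:ℝ) ≤ min (truncQ Q (ξ i w - ξ (i-1) w)) B :=
      le_min (truncQ_nonneg _ _) (by positivity)
    positivity
  have hgB : ∀ i w, g i w ≤ Real.exp (ϑ₀/2 * B) := by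
    intro i w
    apply Real.exp_le_exp.mpr
    exact mul_le_mul_of_nonneg_left (min_le_right _ _) (by positivity)
  have hgm : ∀ i, Measurable[𝓕 i] (g i) := by
    intro i
    exact Real.measurable_exp.comp (measurable_const.mul
      ((measurable_truncQ_sub (hmeas i)
        ((hmeas (i-1)).mono (hmono (Nat.sub_le i 1)) le_rfl) Q).min measurable_const))
  have hFm : ∀ n, Measurable[𝓕 n] (fun w => ∏ i ∈ Finset.Icc 1 n, g i w) := by
    intro n
    apply Finset.measurable_prod
    intro i hi
    exact (hgm i).mono (hmono (Finset.mem_Icc.mp hi).2) le_rfl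
  have hF_int : ∀ n, Integrable (fun w => ∏ i ∈ Finset.Icc 1 n, g i w) μ := by
    intro n
    refine Integrable.mono' (integrable_const (Real.exp (ϑ₀/2 * B) ^ n))
      (((hFm n).mono (hle n) le_rfl).aestronglyMeasurable) (ae_of_all _ fun w => ?_)
    rw [Real.norm_eq_abs, abs_of_nonneg (Finset.prod_nonneg fun i _ => by linarith [hg1 i w])]
    calc ∏ i ∈ Finset.Icc 1 n, g i w
        ≤ ∏ _i ∈ Finset.Icc 1 n, Real.exp (ϑ₀/2 * B) :=
          Finset.prod_le_prod (fun i _ => by linarith [hg1 i w]) (fun i _ => hgB i w)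
      _ = Real.exp (ϑ₀/2 * B) ^ (Finset.Icc 1 n).card := by rw [Finset.prod_const]
      _ ≤ Real.exp (ϑ₀/2 * B) ^ n := by rw [Nat.card_Icc]; simp
  refine ⟨hF_int n, ?_⟩
  induction n with
  | zero => simp
  | succ n ih =>
    have hIcc : Finset.Icc 1 (n+1) = insert (n+1) (Finset.Icc 1 n) := by
      ext x; simp [Finset.mem_Icc, Finset.mem_insert]; omega
    have hnot : (n+1) ∉ Finset.Icc 1 n := by simp
    have hsplit : (fun w => ∏ i ∈ Finset.Icc 1 (n+1), g i w)
        = (fun w => ∏ i ∈ Finset.Icc 1 n, g i w) * g (n+1) := by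
      ext w
      rw [Pi.mul_apply, hIcc, Finset.prod_insert hnot, mul_comm]
    have hg_int : Integrable (g (n+1)) μ := by
      refine Integrable.mono' (integrable_const (Real.exp (ϑ₀/2 * B)))
        (((hgm (n+1)).mono (hle _) le_rfl).aestronglyMeasurable) (ae_of_all _ fun w => ?_)
      rw [Real.norm_eq_abs, abs_of_nonneg (by linarith [hg1 (n+1) w])]
      exact hgB (n+1) w
    have hpull : μ[(fun w => ∏ i ∈ Finset.Icc 1 n, g i w) * g (n+1) | 𝓕 n]
        =ᵐ[μ] (fun w => ∏ i ∈ Finset.Icc 1 n, g i w) * μ[g (n+1) | 𝓕 n] := by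
      apply condExp_mul_of_stronglyMeasurable_left ((hFm n).stronglyMeasurable)
      · rw [← hsplit]; exact hF_int (n+1)
      · exact hg_int
    have hstep := stepBound μ ξ 𝓕 hle hmono hmeas ϑ₀ C₀ hϑ₀ hC₀ hcond Q B (n+1)
      (Nat.le_add_left 1 n)
    have key : ∫ w, (∏ i ∈ Finset.Icc 1 (n+1), g i w) ∂μ
        ≤ (1 + δ) * ∫ w, (∏ i ∈ Finset.Icc 1 n, g i w) ∂μ := by
      have e1 : ∫ w, (∏ i ∈ Finset.Icc 1 (n+1), g i w) ∂μ
          = ∫ w, (μ[(fun w => ∏ i ∈ Finset.Icc 1 (n+1), g i w) | 𝓕 n]) w ∂μ :=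
        (integral_condExp (hle n)).symm
      rw [e1]
      have e2 : ∫ w, (μ[(fun w => ∏ i ∈ Finset.Icc 1 (n+1), g i w) | 𝓕 n]) w ∂μ
          ≤ ∫ w, ((∏ i ∈ Finset.Icc 1 n, g i w) * (1 + δ)) ∂μ := by
        apply integral_mono_ae integrable_condExp ((hF_int n).mul_const _)
        have hpull' : μ[(fun w => ∏ i ∈ Finset.Icc 1 (n+1), g i w) | 𝓕 n]
            =ᵐ[μ] (fun w => ∏ i ∈ Finset.Icc 1 n, g i w) * μ[g (n+1) | 𝓕 n] := by
          rw [hsplit]; exact hpull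
        filter_upwards [hpull', hstep] with w h1 h2
        rw [h1, Pi.mul_apply]
        exact mul_le_mul_of_nonneg_left h2
          (Finset.prod_nonneg fun i _ => by linarith [hg1 i w])
      calc ∫ w, (μ[(fun w => ∏ i ∈ Finset.Icc 1 (n+1), g i w) | 𝓕 n]) w ∂μ
          ≤ ∫ w, ((∏ i ∈ Finset.Icc 1 n, g i w) * (1 + δ)) ∂μ := e2
        _ = (1 + δ) * ∫ w, (∏ i ∈ Finset.Icc 1 n, g i w) ∂μ := by
            rw [integral_mul_const]; ring
    calc ∫ w, (∏ i ∈ Finset.Icc 1 (n+1), g i w) ∂μ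
        ≤ (1 + δ) * ∫ w, (∏ i ∈ Finset.Icc 1 n, g i w) ∂μ := key
      _ ≤ (1 + δ) * (1 + δ) ^ n := mul_le_mul_of_nonneg_left ih (by linarith)
      _ = (1 + δ) ^ (n+1) := by ring

/-- Large deviation lemma (Lemma 3.1). -/
theorem stmt_0
    {W : Type*} [m0 : MeasurableSpace W] (μ : Measure W) [IsProbabilityMeasure μ]
    (ξ : ℕ → W → ℕ∞) (𝓕 : ℕ → MeasurableSpace W)
    (hle : ∀ i, 𝓕 i ≤ m0) (hmono : Monotone 𝓕)
    (hmeas : ∀ i, Measurable[𝓕 i] (ξ i))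
    (hzero : ∀ w, ξ 0 w = 0)
    (hfin : ∀ i, ∀ᵐ w ∂μ, ξ i w ≠ ⊤)
    (hincr : ∀ i, 1 ≤ i → ∀ᵐ w ∂μ, ξ (i - 1) w ≤ ξ i w)
    (ϑ₀ C₀ : ℝ) (hϑ₀ : 0 < ϑ₀) (hC₀ : 1 ≤ C₀)
    (hcond : ∀ i q : ℕ, 1 ≤ i → 1 ≤ q →
      ∀ᵐ w ∂μ,
        (μ[Set.indicator {w | ξ (i - 1) w + (q : ℕ∞) ≤ ξ i w} (fun _ => (1 : ℝ)) | 𝓕 (i - 1)]) w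
          ≤ C₀ * Real.exp (-(q : ℝ) * ϑ₀)) :
    ∀ ε : ℝ, 0 < ε → ∃ Q : ℕ, 0 < Q ∧ ∃ ϑ : ℝ, 0 < ϑ ∧
      ∀ n : ℕ, 1 ≤ n →
        μ {w | ε ≤ (1 / (n : ℝ)) * ∑ i ∈ Finset.Icc 1 n, truncQ Q (ξ i w - ξ (i - 1) w)}
          ≤ ENNReal.ofReal (Real.exp (-ϑ * n)) := by
  intro ε hε
  set s : ℝ := Real.exp (-(ϑ₀/4)) with hs
  have hs0 : 0 < s := Real.exp_pos _
  have hs1 : s < 1 := Real.exp_lt_one_iff.mpr (by linarith)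
  have hL : 0 < Real.exp (ϑ₀/4 * ε) - 1 := by
    have : 1 < Real.exp (ϑ₀/4 * ε) := Real.one_lt_exp_iff.mpr (by positivity)
    linarith
  have htend : Tendsto (fun Q : ℕ => C₀ * (1 - s)⁻¹ * s ^ Q) atTop (nhds 0) := by
    have := (tendsto_pow_atTop_nhds_zero_of_lt_one hs0.le hs1).const_mul (C₀ * (1 - s)⁻¹)
    simpa using this
  obtain ⟨Q, hQδ, hQ1⟩ :=
    ((htend.eventually_lt_const hL).and (eventually_ge_atTop 1)).exists
  refine ⟨Q, hQ1, ϑ₀/4 * ε, by positivity, ?_⟩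
  intro n hn
  have hn0 : (0:ℝ) < n := by exact_mod_cast hn
  set δ : ℝ := C₀ * (1 - s)⁻¹ * s ^ Q with hδ
  have hδ0 : 0 ≤ δ := by
    apply mul_nonneg (mul_nonneg (by linarith) _) (by positivity)
    rw [inv_nonneg]; linarith
  set B : ℕ := n * (Nat.ceil ε + 1) with hB
  have hBε : ε * n ≤ (B : ℝ) := by
    have h1 : ε ≤ (Nat.ceil ε : ℝ) := Nat.le_ceil ε
    have h2 : (B : ℝ) = n * ((Nat.ceil ε : ℝ) + 1) := by rw [hB]; push_cast; ring
    nlinarith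
  obtain ⟨hF_int, hF_bound⟩ :=
    prodBound μ ξ 𝓕 hle hmono hmeas ϑ₀ C₀ hϑ₀ hC₀ hcond Q B n
  set F : W → ℝ := fun w => ∏ i ∈ Finset.Icc 1 n,
      Real.exp (ϑ₀/2 * min (truncQ Q (ξ i w - ξ (i-1) w)) B) with hF
  have hF0 : ∀ w, 0 ≤ F w := fun w => Finset.prod_nonneg fun i _ => (Real.exp_pos _).le
  set a : ℝ := Real.exp (ϑ₀/2 * (ε * n)) with ha
  have ha0 : 0 < a := Real.exp_pos _
  have hsubset : {w | ε ≤ (1 / (n : ℝ)) * ∑ i ∈ Finset.Icc 1 n, truncQ Q (ξ i w - ξ (i - 1) w)}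
      ⊆ {w | a ≤ F w} := by
    intro w hw
    simp only [Set.mem_setOf_eq] at hw ⊢
    have hS : ε * n ≤ ∑ i ∈ Finset.Icc 1 n, truncQ Q (ξ i w - ξ (i - 1) w) := by
      rw [one_div, inv_mul_eq_div] at hw
      exact (le_div_iff₀ hn0).mp hw
    have hT : ε * n ≤ ∑ i ∈ Finset.Icc 1 n, min (truncQ Q (ξ i w - ξ (i-1) w)) (B:ℝ) := by
      by_cases hall : ∀ i ∈ Finset.Icc 1 n, truncQ Q (ξ i w - ξ (i-1) w) ≤ (B:ℝ)
      · calc ε * n ≤ ∑ i ∈ Finset.Icc 1 n, truncQ Q (ξ i w - ξ (i - 1) w) := hS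
          _ = ∑ i ∈ Finset.Icc 1 n, min (truncQ Q (ξ i w - ξ (i-1) w)) (B:ℝ) :=
            Finset.sum_congr rfl fun i hi => (min_eq_left (hall i hi)).symm
      · push_neg at hall
        obtain ⟨i₀, hi₀, hBlt⟩ := hall
        calc ε * n ≤ (B : ℝ) := hBε
          _ = min (truncQ Q (ξ i₀ w - ξ (i₀-1) w)) (B:ℝ) := (min_eq_right hBlt.le).symm
          _ ≤ ∑ i ∈ Finset.Icc 1 n, min (truncQ Q (ξ i w - ξ (i-1) w)) (B:ℝ) :=
            Finset.single_le_sum (f := fun i => min (truncQ Q (ξ i w - ξ (i-1) w)) (B:ℝ))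
              (fun i _ => le_min (truncQ_nonneg _ _) (Nat.cast_nonneg B)) hi₀
    have hFw : F w = Real.exp (∑ i ∈ Finset.Icc 1 n,
        ϑ₀/2 * min (truncQ Q (ξ i w - ξ (i-1) w)) (B:ℝ)) := (Real.exp_sum _ _).symm
    rw [ha, hFw]
    apply Real.exp_le_exp.mpr
    rw [← Finset.mul_sum] at *
    nlinarith
  have hmarkov := mul_meas_ge_le_integral_of_nonneg (ae_of_all μ hF0) hF_int a
  have hμ1 : (μ {w | a ≤ F w}).toReal ≤ a⁻¹ * ∫ w, F w ∂μ := by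
    rw [← div_eq_inv_mul]
    rw [le_div_iff₀ ha0]
    nlinarith [hmarkov, show μ.real {x | a ≤ F x} = (μ {w | a ≤ F w}).toReal from rfl]
  have hpow : (1 + δ) ^ n ≤ Real.exp (ϑ₀/4 * ε) ^ n :=
    pow_le_pow_left₀ (by linarith) (by linarith) n
  have hfinal : (μ {w | a ≤ F w}).toReal ≤ Real.exp (-(ϑ₀/4 * ε) * n) := by
    calc (μ {w | a ≤ F w}).toReal ≤ a⁻¹ * ∫ w, F w ∂μ := hμ1
      _ ≤ a⁻¹ * (1 + δ) ^ n := by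
          apply mul_le_mul_of_nonneg_left _ (by positivity)
          exact hF_bound
      _ ≤ a⁻¹ * Real.exp (ϑ₀/4 * ε) ^ n := by
          apply mul_le_mul_of_nonneg_left hpow (by positivity)
      _ = Real.exp (-(ϑ₀/4 * ε) * n) := by
          rw [ha, ← Real.exp_nat_mul, ← Real.exp_neg, ← Real.exp_add]
          congr 1
          push_cast
          ring
  rw [ENNReal.le_ofReal_iff_toReal_le (measure_ne_top μ _) (Real.exp_nonneg _)]
  calc (μ {w | ε ≤ (1 / (n : ℝ)) * ∑ i ∈ Finset.Icc 1 n, truncQ Q (ξ i w - ξ (i - 1) w)}).toReal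
      ≤ (μ {w | a ≤ F w}).toReal :=
        ENNReal.toReal_mono (measure_ne_top μ _) (measure_mono hsubset)
    _ ≤ Real.exp (-(ϑ₀/4 * ε) * n) := hfinal
end

section
/- Let ψ_t : [−1,1]^m → ℝ (t ≥ 0) be a family of measurable functions, uniformly bounded by some M > 0, such that there exist C ≥ 1, ϑ > 0 with |∫ ψ_t(w) ψ_l(w) dw| ≤ C e^{−ϑ |l − t|} for all t, l > 0, and such that for some C₁ ≥ 1 the map t ↦ ψ_t(w) is C₁-Lipschitz for each w. Then for Lebesgue-almost every w ∈ [−1,1]^m, (1/T) ∫_0^T ψ_t(w) dt → 0 as T → ∞. -/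
open MeasureTheory Filter intervalIntegral Set

private lemma aux_integrable {α : Type*} [MeasurableSpace α] {μ : Measure α} [IsFiniteMeasure μ]
    {f : α → ℝ} (hf : AEStronglyMeasurable f μ) {B : ℝ} (h : ∀ x, |f x| ≤ B) :
    Integrable f μ :=
  Integrable.mono' (integrable_const B) hf (Eventually.of_forall fun x => by
    simpa [Real.norm_eq_abs] using h x)

private lemma aux_exp_integrable {ϑ : ℝ} (hϑ : 0 < ϑ) :
    Integrable (fun x : ℝ => Real.exp (-ϑ * |x|)) := by
  have h1 : IntegrableOn (fun x : ℝ => Real.exp (-ϑ * |x|)) (Ioi 0) := by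
    refine (exp_neg_integrableOn_Ioi 0 hϑ).congr_fun (fun x hx => ?_) measurableSet_Ioi
    rw [abs_of_pos hx]
  have int_Iic : IntegrableOn (fun x : ℝ => Real.exp (-ϑ * |x|)) (Iic 0) := by
    rw [← Measure.map_neg_eq_self (volume : Measure ℝ)]
    have m : MeasurableEmbedding fun x : ℝ => -x := (Homeomorph.neg ℝ).measurableEmbedding
    rw [m.integrableOn_map_iff]
    simp_rw [Function.comp_def, abs_neg, neg_preimage, neg_Iic, neg_zero]
    exact (integrableOn_Ici_iff_integrableOn_Ioi).mpr h1
  rw [← integrableOn_univ, ← Iic_union_Ioi (a := (0:ℝ))]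
  exact int_Iic.union h1

private lemma aux_exp_integral {ϑ : ℝ} (hϑ : 0 < ϑ) :
    ∫ x : ℝ, Real.exp (-ϑ * |x|) = 2 / ϑ := by
  have h1 : ∫ x : ℝ, Real.exp (-ϑ * |x|) = 2 * ∫ x in Ioi (0:ℝ), Real.exp (-ϑ * x) :=
    integral_comp_abs (f := fun x => Real.exp (-ϑ * x))
  have h2 : ∫ x in Ioi (0:ℝ), Real.exp (-ϑ * x) = ϑ⁻¹ := by
    have := integral_comp_mul_left_Ioi (fun y => Real.exp (-y)) 0 hϑ
    simp only [mul_zero, integral_exp_neg_Ioi, neg_zero, Real.exp_zero, smul_eq_mul, mul_one]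
      at this
    simpa [neg_mul] using this
  rw [h1, h2]; ring


private lemma aux_exp_bound {ϑ C : ℝ} (hϑ : 0 < ϑ) (hC : 0 ≤ C) (t T : ℝ) :
    ∫ l in Ioc (0:ℝ) T, C * Real.exp (-ϑ * |l - t|) ≤ 2 * C / ϑ := by
  have hint : Integrable (fun l : ℝ => Real.exp (-ϑ * |l - t|)) :=
    (aux_exp_integrable hϑ).comp_sub_right t
  calc ∫ l in Ioc (0:ℝ) T, C * Real.exp (-ϑ * |l - t|)
      ≤ ∫ l : ℝ, C * Real.exp (-ϑ * |l - t|) :=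
        setIntegral_le_integral (hint.const_mul C)
          (Eventually.of_forall fun x => by positivity)
    _ = C * ∫ l : ℝ, Real.exp (-ϑ * |l - t|) := MeasureTheory.integral_const_mul C _
    _ = C * (2 / ϑ) := by
        rw [integral_sub_right_eq_self (fun x => Real.exp (-ϑ * |x|)) t, aux_exp_integral hϑ]
    _ = 2 * C / ϑ := by ring

private lemma aux_variance (m : ℕ) (ψ : ℝ → (Fin m → ℝ) → ℝ)
    (hmeas : Measurable (Function.uncurry ψ))
    (M : ℝ) (hM : 0 ≤ M) (hbdd : ∀ t w, |ψ t w| ≤ M)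
    (C ϑ : ℝ) (hC : 0 ≤ C) (hϑ : 0 < ϑ)
    (hcorr : ∀ t l : ℝ, 0 < t → 0 < l →
      |∫ w in Icc (fun _ : Fin m => (-1 : ℝ)) (fun _ => 1), ψ t w * ψ l w|
        ≤ C * Real.exp (-ϑ * |l - t|))
    (T : ℝ) (hT : 0 ≤ T) :
    ∫ w in Icc (fun _ : Fin m => (-1 : ℝ)) (fun _ => 1), (∫ t in Ioc (0:ℝ) T, ψ t w) ^ 2
      ≤ (2 * C / ϑ) * T := by
  set Q : Set (Fin m → ℝ) := Icc (fun _ => (-1 : ℝ)) (fun _ => 1) with hQ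
  set μ : Measure (Fin m → ℝ) := volume.restrict Q with hμ
  set ν : Measure ℝ := volume.restrict (Ioc (0:ℝ) T) with hν
  have hμfin : IsFiniteMeasure μ := ⟨by
    rw [hμ, Measure.restrict_apply_univ]; exact isCompact_Icc.measure_lt_top⟩
  have hνfin : IsFiniteMeasure ν := ⟨by
    rw [hν, Measure.restrict_apply_univ]; exact measure_Ioc_lt_top⟩
  have hνuniv : (ν univ).toReal = T := by
    rw [hν, Measure.restrict_apply_univ, Real.volume_Ioc, sub_zero, ENNReal.toReal_ofReal hT]
  set Vol : ℝ := (μ univ).toReal with hVol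
  have hMM : 0 ≤ M * M := mul_nonneg hM hM
  have habs : ∀ (t l : ℝ) (w : Fin m → ℝ), |ψ t w * ψ l w| ≤ M * M := fun t l w => by
    rw [abs_mul]; exact mul_le_mul (hbdd _ _) (hbdd _ _) (abs_nonneg _) hM
  have hmul2 : Measurable fun p : ((Fin m → ℝ) × ℝ) × ℝ => ψ p.1.2 p.1.1 * ψ p.2 p.1.1 :=
    (hmeas.comp ((measurable_fst.snd).prodMk measurable_fst.fst)).mul
      (hmeas.comp (measurable_snd.prodMk measurable_fst.fst))
  have sq_eq : ∀ w, (∫ t, ψ t w ∂ν) ^ 2 = ∫ t, (∫ l, ψ t w * ψ l w ∂ν) ∂ν := by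
    intro w
    simp_rw [MeasureTheory.integral_const_mul]
    rw [MeasureTheory.integral_mul_const, sq]
  set K : ℝ → ℝ → ℝ := fun t l => ∫ w, ψ t w * ψ l w ∂μ with hK
  have swap2 : ∀ t : ℝ, ∫ w, (∫ l, ψ t w * ψ l w ∂ν) ∂μ = ∫ l, K t l ∂ν := by
    intro t
    refine integral_integral_swap ?_
    refine aux_integrable ?_ (B := M * M) ?_
    · exact (((hmeas.comp (measurable_const.prodMk measurable_fst)).mul
        (hmeas.comp (measurable_snd.prodMk measurable_fst)))).aestronglyMeasurable
    · intro p; exact habs _ _ _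
  have Gmeas : StronglyMeasurable fun p : (Fin m → ℝ) × ℝ => ∫ l, ψ p.2 p.1 * ψ l p.1 ∂ν :=
    hmul2.stronglyMeasurable.integral_prod_right'
  have Gbound : ∀ p : (Fin m → ℝ) × ℝ, |∫ l, ψ p.2 p.1 * ψ l p.1 ∂ν| ≤ M * M * T := by
    intro p
    rw [← Real.norm_eq_abs]
    calc ‖∫ l, ψ p.2 p.1 * ψ l p.1 ∂ν‖ ≤ ∫ l, M * M ∂ν := by
          refine norm_integral_le_of_norm_le (integrable_const _) (Eventually.of_forall fun l => ?_)
          rw [Real.norm_eq_abs]; exact habs _ _ _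
      _ = M * M * T := by
          rw [MeasureTheory.integral_const, measureReal_def, smul_eq_mul, hνuniv, mul_comm]
  have swap1 : ∫ w, (∫ t, (∫ l, ψ t w * ψ l w ∂ν) ∂ν) ∂μ
      = ∫ t, (∫ w, (∫ l, ψ t w * ψ l w ∂ν) ∂μ) ∂ν :=
    integral_integral_swap (aux_integrable Gmeas.aestronglyMeasurable Gbound)
  have Kmeas : StronglyMeasurable fun q : ℝ × ℝ => K q.1 q.2 := by
    have : Measurable fun p : (ℝ × ℝ) × (Fin m → ℝ) => ψ p.1.1 p.2 * ψ p.1.2 p.2 :=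
      (hmeas.comp ((measurable_fst.fst).prodMk measurable_snd)).mul
        (hmeas.comp ((measurable_fst.snd).prodMk measurable_snd))
    exact this.stronglyMeasurable.integral_prod_right'
  have hKbdd : ∀ q : ℝ × ℝ, |K q.1 q.2| ≤ M * M * Vol := by
    intro q
    rw [← Real.norm_eq_abs]
    calc ‖∫ w, ψ q.1 w * ψ q.2 w ∂μ‖ ≤ ∫ _, M * M ∂μ := by
          refine norm_integral_le_of_norm_le (integrable_const _) (Eventually.of_forall fun w => ?_)
          rw [Real.norm_eq_abs]; exact habs _ _ _
      _ = M * M * Vol := by rw [MeasureTheory.integral_const, measureReal_def, smul_eq_mul, mul_comm]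
  have hXmeas : StronglyMeasurable fun t : ℝ => ∫ l, K t l ∂ν :=
    Kmeas.integral_prod_right'
  have hXbdd : ∀ t : ℝ, |∫ l, K t l ∂ν| ≤ M * M * Vol * T := by
    intro t
    rw [← Real.norm_eq_abs]
    calc ‖∫ l, K t l ∂ν‖ ≤ ∫ _, M * M * Vol ∂ν := by
          refine norm_integral_le_of_norm_le (integrable_const _) (Eventually.of_forall fun l => ?_)
          rw [Real.norm_eq_abs]; exact hKbdd (t, l)
      _ = M * M * Vol * T := by rw [MeasureTheory.integral_const, measureReal_def, smul_eq_mul, hνuniv, mul_comm]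
  have hXle : ∀ᵐ t ∂ν, ∫ l, K t l ∂ν ≤ 2 * C / ϑ := by
    filter_upwards [ae_restrict_mem measurableSet_Ioc] with t ht
    calc ∫ l, K t l ∂ν ≤ ∫ l, C * Real.exp (-ϑ * |l - t|) ∂ν := by
          refine integral_mono_ae
            (aux_integrable (Kmeas.comp_measurable
              (measurable_const.prodMk measurable_id)).aestronglyMeasurable
              (fun l => hKbdd (t, l)))
            ((((aux_exp_integrable hϑ).comp_sub_right t).const_mul C).restrict) ?_
          filter_upwards [ae_restrict_mem measurableSet_Ioc] with l hl
          exact le_trans (le_abs_self _) (hcorr t l ht.1 hl.1)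
      _ ≤ 2 * C / ϑ := aux_exp_bound hϑ hC t T
  calc ∫ w, (∫ t, ψ t w ∂ν) ^ 2 ∂μ
      = ∫ w, (∫ t, (∫ l, ψ t w * ψ l w ∂ν) ∂ν) ∂μ := by simp_rw [sq_eq]
    _ = ∫ t, (∫ w, (∫ l, ψ t w * ψ l w ∂ν) ∂μ) ∂ν := swap1
    _ = ∫ t, (∫ l, K t l ∂ν) ∂ν := by simp_rw [swap2]
    _ ≤ ∫ _, 2 * C / ϑ ∂ν :=
        integral_mono_ae
          (aux_integrable hXmeas.aestronglyMeasurable hXbdd) (integrable_const _) hXle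
    _ = (2 * C / ϑ) * T := by rw [MeasureTheory.integral_const, measureReal_def, smul_eq_mul, hνuniv, mul_comm]

private lemma aux_interp (g : ℝ → ℝ) (M : ℝ) (hM : 0 < M) (hg : ∀ t, |g t| ≤ M)
    (hgi : ∀ a b : ℝ, IntervalIntegrable g volume a b)
    (hconv : Tendsto (fun n : ℕ => (∫ t in (0:ℝ)..(((n:ℝ)+1)^2), g t) / ((n:ℝ)+1)^2)
      atTop (nhds 0)) :
    Tendsto (fun T : ℝ => (1/T) * ∫ t in (0:ℝ)..T, g t) atTop (nhds 0) := by
  rw [Metric.tendsto_atTop] at hconv ⊢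
  intro ε hε
  obtain ⟨N₀, hN₀⟩ := hconv (ε/2) (by linarith)
  obtain ⟨N₁, hN₁⟩ := exists_nat_gt (12 * M / ε)
  set N : ℕ := max N₀ N₁ with hN
  refine ⟨((N:ℝ)+1)^2, fun T hT => ?_⟩
  have hN1pos : (0:ℝ) < (N:ℝ) + 1 := by positivity
  have hTpos : (0:ℝ) < T := lt_of_lt_of_le (by positivity) hT
  set k : ℕ := Nat.floor (Real.sqrt T) with hk
  have hsqrtT : (N:ℝ) + 1 ≤ Real.sqrt T := by
    rw [show ((N:ℝ)+1) = Real.sqrt (((N:ℝ)+1)^2) from (Real.sqrt_sq hN1pos.le).symm]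
    exact Real.sqrt_le_sqrt hT
  have hkgeN : N + 1 ≤ k := Nat.le_floor (by exact_mod_cast hsqrtT)
  have hkge : (N:ℝ) + 1 ≤ (k:ℝ) := by exact_mod_cast hkgeN
  have hkpos : (0:ℝ) < (k:ℝ) := lt_of_lt_of_le hN1pos hkge
  have hk2T : ((k:ℝ))^2 ≤ T := by
    have h1 : (k:ℝ) ≤ Real.sqrt T := Nat.floor_le (Real.sqrt_nonneg T)
    calc ((k:ℝ))^2 ≤ (Real.sqrt T)^2 := by nlinarith [Real.sqrt_nonneg T]
      _ = T := Real.sq_sqrt hTpos.le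
  have hTk1 : T < ((k:ℝ)+1)^2 := by
    have h1 : Real.sqrt T < (k:ℝ) + 1 := Nat.lt_floor_add_one _
    calc T = (Real.sqrt T)^2 := (Real.sq_sqrt hTpos.le).symm
      _ < ((k:ℝ)+1)^2 := by nlinarith [Real.sqrt_nonneg T]
  have hk2pos : (0:ℝ) < ((k:ℝ))^2 := by positivity
  obtain ⟨n, hn⟩ : ∃ n : ℕ, k = n + 1 := ⟨k - 1, by omega⟩
  have hcast : ((n:ℝ) + 1) = (k:ℝ) := by rw [hn]; push_cast; ring
  have hA : |(∫ t in (0:ℝ)..((k:ℝ))^2, g t) / ((k:ℝ))^2| < ε / 2 := by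
    have hnN₀ : n ≥ N₀ := by
      have : N₀ ≤ N := le_max_left _ _
      omega
    have := hN₀ n hnN₀
    rwa [Real.dist_eq, sub_zero, hcast] at this
  set I : ℝ := ∫ t in (0:ℝ)..T, g t with hI
  set J : ℝ := ∫ t in (0:ℝ)..((k:ℝ))^2, g t with hJ
  have hIJ : I - J = ∫ t in (((k:ℝ))^2)..T, g t :=
    integral_interval_sub_left (hgi 0 T) (hgi 0 _)
  have hIJle : |I - J| ≤ M * (T - ((k:ℝ))^2) := by
    rw [hIJ, ← Real.norm_eq_abs]
    have := intervalIntegral.norm_integral_le_of_norm_le_const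
      (C := M) (f := g) (a := ((k:ℝ))^2) (b := T)
      (fun x _ => by rw [Real.norm_eq_abs]; exact hg x)
    rwa [abs_of_nonneg (by linarith)] at this
  have hJle : |J| ≤ M * ((k:ℝ))^2 := by
    rw [hJ, ← Real.norm_eq_abs]
    have := intervalIntegral.norm_integral_le_of_norm_le_const
      (C := M) (f := g) (a := (0:ℝ)) (b := ((k:ℝ))^2)
      (fun x _ => by rw [Real.norm_eq_abs]; exact hg x)
    rwa [sub_zero, abs_of_nonneg hk2pos.le] at this
  have hTk : T - ((k:ℝ))^2 ≤ 3 * (k:ℝ) := by nlinarith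
  have hT0 : T ≠ 0 := ne_of_gt hTpos
  have hk0 : ((k:ℝ))^2 ≠ 0 := ne_of_gt hk2pos
  have hid : (1/T) * I = J / ((k:ℝ))^2 + ((I - J)/T + J * (1/T - 1/((k:ℝ))^2)) := by
    field_simp
    ring
  have hs1 : |(I - J)/T| ≤ 3 * M / (k:ℝ) := by
    rw [abs_div, abs_of_pos hTpos]
    calc |I - J| / T ≤ (M * (3 * (k:ℝ))) / T := by
          gcongr <;> nlinarith
      _ ≤ (M * (3 * (k:ℝ))) / ((k:ℝ))^2 :=
          div_le_div_of_nonneg_left (by positivity) hk2pos hk2T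
      _ = 3 * M / (k:ℝ) := by field_simp
  have hs2 : |J * (1/T - 1/((k:ℝ))^2)| ≤ 3 * M / (k:ℝ) := by
    rw [abs_mul]
    have hx : |1/T - 1/((k:ℝ))^2| = (T - ((k:ℝ))^2) / (T * ((k:ℝ))^2) := by
      rw [abs_of_nonpos]
      · field_simp
        ring
      · have : 1/T ≤ 1/((k:ℝ))^2 := one_div_le_one_div_of_le hk2pos hk2T
        linarith
    rw [hx]
    calc |J| * ((T - ((k:ℝ))^2) / (T * ((k:ℝ))^2))
        ≤ (M * ((k:ℝ))^2) * ((T - ((k:ℝ))^2) / (T * ((k:ℝ))^2)) := by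
          exact mul_le_mul_of_nonneg_right hJle
            (div_nonneg (by linarith) (by positivity))
      _ = M * (T - ((k:ℝ))^2) / T := by field_simp
      _ ≤ (M * (3 * (k:ℝ))) / T := by
          gcongr <;> nlinarith
      _ ≤ (M * (3 * (k:ℝ))) / ((k:ℝ))^2 :=
          div_le_div_of_nonneg_left (by positivity) hk2pos hk2T
      _ = 3 * M / (k:ℝ) := by field_simp
  have hklarge : 12 * M / ε < (k:ℝ) := by
    have h1 : (N₁:ℝ) ≤ (N:ℝ) := by exact_mod_cast le_max_right N₀ N₁
    linarith
  have hD : 6 * M / (k:ℝ) < ε / 2 := by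
    rw [div_lt_iff₀ hkpos]
    have h12 : 12 * M < ε * (k:ℝ) := by
      rw [div_lt_iff₀ hε] at hklarge
      linarith [mul_comm (k:ℝ) ε]
    linarith
  rw [Real.dist_eq, sub_zero, hid]
  calc |J / ((k:ℝ))^2 + ((I - J)/T + J * (1/T - 1/((k:ℝ))^2))|
      ≤ |J / ((k:ℝ))^2| + (|(I - J)/T| + |J * (1/T - 1/((k:ℝ))^2)|) :=
        (abs_add_le _ _).trans (by gcongr; exact abs_add_le _ _)
    _ < ε := by
        have hsum : |(I - J)/T| + |J * (1/T - 1/((k:ℝ))^2)| ≤ 6 * M / (k:ℝ) := by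
          calc |(I - J)/T| + |J * (1/T - 1/((k:ℝ))^2)| ≤ 3*M/(k:ℝ) + 3*M/(k:ℝ) :=
                add_le_add hs1 hs2
            _ = 6 * M / (k:ℝ) := by ring
        have hJk : |J / ((k:ℝ))^2| < ε/2 := hA
        linarith

/-- Law of large numbers for continuous families with exponentially decaying correlations
(Lemma 3.3 of Chaika–Eskin / Lemma 3.2–3.3 in the paper). -/
theorem stmt_3
    (m : ℕ) (hm : 1 ≤ m)
    (ψ : ℝ → (Fin m → ℝ) → ℝ)
    (hmeas : Measurable (Function.uncurry ψ))
    (M : ℝ) (hM : 0 < M) (hbdd : ∀ t w, |ψ t w| ≤ M)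
    (C ϑ : ℝ) (hC : 1 ≤ C) (hϑ : 0 < ϑ)
    (hcorr : ∀ t l : ℝ, 0 < t → 0 < l →
      |∫ w in Set.Icc (fun _ : Fin m => (-1 : ℝ)) (fun _ => 1), ψ t w * ψ l w|
        ≤ C * Real.exp (-ϑ * |l - t|))
    (C₁ : ℝ) (hC₁ : 1 ≤ C₁)
    (hLip : ∀ w t l, |ψ t w - ψ l w| ≤ C₁ * |t - l|) :
    ∀ᵐ w ∂(volume.restrict (Set.Icc (fun _ : Fin m => (-1 : ℝ)) (fun _ => 1))),
      Tendsto (fun T : ℝ => (1 / T) * ∫ t in (0 : ℝ)..T, ψ t w) atTop (nhds 0) := by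
  set Q : Set (Fin m → ℝ) := Set.Icc (fun _ => (-1 : ℝ)) (fun _ => 1) with hQ
  set μ : Measure (Fin m → ℝ) := volume.restrict Q with hμ
  have hμfin : IsFiniteMeasure μ := ⟨by
    rw [hμ, Measure.restrict_apply_univ]; exact isCompact_Icc.measure_lt_top⟩
  set Tn : ℕ → ℝ := fun n => ((n:ℝ)+1)^2 with hTndef
  have hTn : ∀ n : ℕ, (0:ℝ) ≤ Tn n := fun n => by positivity
  have hTnpos : ∀ n : ℕ, (0:ℝ) < Tn n := fun n => by positivity
  set S : ℕ → (Fin m → ℝ) → ℝ := fun n w => ∫ t in Ioc (0:ℝ) (Tn n), ψ t w with hS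
  have hSmeas : ∀ n, StronglyMeasurable (S n) := fun n => by
    have h : Measurable fun p : (Fin m → ℝ) × ℝ => ψ p.2 p.1 := hmeas.comp measurable_swap
    exact h.stronglyMeasurable.integral_prod_right'
  have hSbdd : ∀ n w, |S n w| ≤ M * Tn n := by
    intro n w
    rw [← Real.norm_eq_abs]
    calc ‖S n w‖ ≤ ∫ _ in Ioc (0:ℝ) (Tn n), M := by
          refine norm_integral_le_of_norm_le (integrable_const _) ?_
          exact Eventually.of_forall fun t => by rw [Real.norm_eq_abs]; exact hbdd t w
      _ = M * Tn n := by
          rw [MeasureTheory.integral_const, measureReal_def, Measure.restrict_apply_univ, Real.volume_Ioc,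
            sub_zero, smul_eq_mul, ENNReal.toReal_ofReal (hTn n), mul_comm]
  have hSdivmeas : ∀ n, Measurable fun w => (S n w / Tn n)^2 := fun n =>
    ((hSmeas n).measurable.div_const _).pow_const 2
  have hvar : ∀ n : ℕ, ∫ w, (S n w / Tn n)^2 ∂μ ≤ (2*C/ϑ) * (1/Tn n) := by
    intro n
    have h2 := aux_variance m ψ hmeas M hM.le hbdd C ϑ (by linarith) hϑ hcorr (Tn n) (hTn n)
    have e1 : ∫ w, (S n w / Tn n)^2 ∂μ = (∫ w, (S n w)^2 ∂μ) * ((Tn n)^2)⁻¹ := by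
      simp_rw [div_pow, div_eq_mul_inv]
      rw [MeasureTheory.integral_mul_const]
    rw [e1]
    calc (∫ w, (S n w)^2 ∂μ) * ((Tn n)^2)⁻¹
        ≤ ((2*C/ϑ) * Tn n) * ((Tn n)^2)⁻¹ := by
          apply mul_le_mul_of_nonneg_right _ (by positivity)
          exact h2
      _ = (2*C/ϑ) * (1/Tn n) := by
          have := (hTnpos n).ne'
          field_simp
  have hint : ∀ n, Integrable (fun w => (S n w / Tn n)^2) μ := by
    intro n
    refine aux_integrable (hSdivmeas n).aestronglyMeasurable (B := M^2) fun w => ?_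
    rw [abs_of_nonneg (sq_nonneg _), div_pow, div_le_iff₀ (by positivity)]
    calc (S n w)^2 = |S n w|^2 := (sq_abs _).symm
      _ ≤ (M * Tn n)^2 := by
          have := hSbdd n w
          nlinarith [abs_nonneg (S n w)]
      _ = M^2 * (Tn n)^2 := by ring
  set g : ℕ → (Fin m → ℝ) → ENNReal := fun n w => ENNReal.ofReal ((S n w / Tn n)^2) with hg
  have hgle : ∀ n, ∫⁻ w, g n w ∂μ ≤ ENNReal.ofReal ((2*C/ϑ) * (1/Tn n)) := by
    intro n
    rw [hg, ← ofReal_integral_eq_lintegral_ofReal (hint n)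
      (Eventually.of_forall fun w => sq_nonneg _)]
    exact ENNReal.ofReal_le_ofReal (hvar n)
  have hsummable : Summable (fun n : ℕ => (2*C/ϑ) * (1/Tn n)) := by
    apply Summable.mul_left
    have h1 : Summable (fun n : ℕ => 1 / ((n:ℝ))^2) :=
      Real.summable_one_div_nat_pow.mpr one_lt_two
    have h2 := (summable_nat_add_iff (f := fun n : ℕ => 1 / ((n:ℝ))^2) 1).mpr h1
    refine h2.congr fun n => ?_
    push_cast
    rfl
  have htsum : ∑' n, ∫⁻ w, g n w ∂μ ≠ ⊤ := by
    refine ne_top_of_le_ne_top ?_ (ENNReal.tsum_le_tsum hgle)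
    rw [← ENNReal.ofReal_tsum_of_nonneg (fun n => by positivity) hsummable]
    exact ENNReal.ofReal_ne_top
  have hgmeas : ∀ n, AEMeasurable (g n) μ := fun n =>
    (ENNReal.measurable_ofReal.comp (hSdivmeas n)).aemeasurable
  have hae : ∀ᵐ w ∂μ, ∑' n, g n w < ⊤ := by
    refine ae_lt_top' (AEMeasurable.ennreal_tsum hgmeas) ?_
    rw [lintegral_tsum hgmeas]
    exact htsum
  filter_upwards [hae] with w hw
  have hsum_w : Summable (fun n => (S n w / Tn n)^2) := by
    have h1 := ENNReal.summable_toReal hw.ne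
    refine h1.congr fun n => ?_
    rw [hg]
    exact ENNReal.toReal_ofReal (sq_nonneg _)
  have h0 : Tendsto (fun n => (S n w / Tn n)^2) atTop (nhds 0) :=
    hsum_w.tendsto_atTop_zero
  have h1 : Tendsto (fun n => S n w / Tn n) atTop (nhds 0) := by
    have hsq : Tendsto (fun n => Real.sqrt ((S n w / Tn n)^2)) atTop (nhds (Real.sqrt 0)) :=
      (Real.continuous_sqrt.continuousAt).tendsto.comp h0
    rw [Real.sqrt_zero] at hsq
    have habs : Tendsto (fun n => |S n w / Tn n|) atTop (nhds 0) :=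
      hsq.congr fun n => Real.sqrt_sq_eq_abs _
    exact (tendsto_zero_iff_abs_tendsto_zero _).mpr habs
  have h2 : Tendsto (fun n : ℕ => (∫ t in (0:ℝ)..(((n:ℝ)+1)^2), ψ t w) / ((n:ℝ)+1)^2)
      atTop (nhds 0) := by
    refine h1.congr fun n => ?_
    simp only [hS, hTndef]
    rw [integral_of_le (by positivity : (0:ℝ) ≤ ((n:ℝ)+1)^2)]
  have hgi : ∀ a b : ℝ, IntervalIntegrable (fun t => ψ t w) volume a b := by
    intro a b
    rw [intervalIntegrable_iff]
    refine Measure.integrableOn_of_bounded (M := M) measure_Ioc_lt_top.ne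
      (hmeas.comp (measurable_id.prodMk measurable_const)).aestronglyMeasurable ?_
    exact Eventually.of_forall fun t => by rw [Real.norm_eq_abs]; exact hbdd t w
  exact aux_interp (fun t => ψ t w) M hM (fun t => hbdd t w) hgi h2
end

section
/- Let Φ be the root system of type D_n (n ≥ 4) realized in ℝ^n with positive roots Φ⁺ = {e_i ± e_j : 1 ≤ i < j ≤ n}. Let k = ⌊(n−3)/2⌋ and define, for 1 ≤ i ≤ k, β_{2i−1} = e_{2i−1} − e_{2i} and β_{2i} = e_{2i−1} + e_{2i}, and additionally β_{n−2} = e_{n−2} + e_{n−1}, β_{n−1} = e_{n−2} − e_n, β_n = e_{n−2} − e_{n−1} (for n odd). Then all these vectors lie in Φ⁺ and the sum of any two of them (possibly equal) is not in Φ⁺. -/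
private lemma aux13 {n : ℕ} (a b c d p q : Fin n) (hpq : p ≠ q)
    (hab : a ≠ b) (hcd : c ≠ d) (s t u : ℝ)
    (hs : s = 1 ∨ s = -1) (ht : t = 1 ∨ t = -1) (hu : u = 1 ∨ u = -1)
    (hdisj : a = c ∨ (a ≠ c ∧ a ≠ d ∧ b ≠ c ∧ b ≠ d)) :
    (EuclideanSpace.single a (1:ℝ) + s • EuclideanSpace.single b 1) +
      (EuclideanSpace.single c 1 + t • EuclideanSpace.single d 1) ≠
      EuclideanSpace.single p 1 + u • EuclideanSpace.single q 1 := by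
  intro h
  have hj : ∀ j : Fin n, (if j = a then (1:ℝ) else 0) + s * (if j = b then 1 else 0)
      + ((if j = c then (1:ℝ) else 0) + t * (if j = d then 1 else 0))
      = (if j = p then (1:ℝ) else 0) + u * (if j = q then 1 else 0) := by
    intro j
    have := congrArg (fun v : EuclideanSpace ℝ (Fin n) => v j) h
    simpa [PiLp.add_apply, PiLp.smul_apply, EuclideanSpace.single_apply,
      smul_eq_mul] using this
  rcases hdisj with rfl | ⟨hac, had, hbc, hbd⟩
  · have h1 := hj a
    simp [hab, (Ne.symm hab), hcd, (Ne.symm hcd)] at h1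
    rcases hu with rfl | rfl <;> split_ifs at h1 with h2 h3 <;>
      first
        | exact hpq (h2 ▸ ‹a = q› ▸ rfl)
        | linarith
  · -- all four distinct; a, b, c are three distinct nonzero coordinates
    have key : ∀ j : Fin n, ((if j = a then (1:ℝ) else 0) + s * (if j = b then 1 else 0)
        + ((if j = c then (1:ℝ) else 0) + t * (if j = d then 1 else 0)) ≠ 0) →
        j = p ∨ j = q := by
      intro j hne
      by_contra hc
      push_neg at hc
      have := hj j
      simp [hc.1, hc.2, mul_ite] at this
      simp only [mul_ite, mul_one, mul_zero] at hne
      exact hne this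
    have hA : a = p ∨ a = q := by
      apply key
      simp [hab, Ne.symm hab, hac, had]
    have hB : b = p ∨ b = q := by
      apply key
      rcases hs with rfl | rfl <;> simp [Ne.symm hab, hbc, hbd] <;> norm_num
    have hC : c = p ∨ c = q := by
      apply key
      simp [Ne.symm hac, Ne.symm hbc, hcd]
    rcases hA with rfl | rfl <;> rcases hB with rfl | rfl <;> rcases hC with h | h <;>
      simp_all

/-- Strongly orthogonal-type family in `D_n` (n odd, n ≥ 4... i.e. n ≥ 5 odd): the listed
vectors are positive roots and no sum of two of them is a positive root (Lemma A.3, case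
`D_n` with `n` odd). Indices are 0-based: the paper's `e_j` is `em (j - 1)`. -/
theorem stmt_13
    (n : ℕ) (hn : 4 ≤ n) (hodd : Odd n)
    (e : Fin n → EuclideanSpace ℝ (Fin n))
    (he : ∀ i, e i = EuclideanSpace.single i 1)
    (em : ℕ → EuclideanSpace ℝ (Fin n))
    (hem : ∀ j : ℕ, ∀ h : j < n, em j = e ⟨j, h⟩)
    (Φplus : Set (EuclideanSpace ℝ (Fin n)))
    (hΦplus : Φplus = {v | ∃ p q : Fin n, p < q ∧ (v = e p + e q ∨ v = e p - e q)})
    (k : ℕ) (hk : k = (n - 3) / 2)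
    (B : Set (EuclideanSpace ℝ (Fin n)))
    (hB : B = {v | (∃ i : ℕ, 1 ≤ i ∧ i ≤ k ∧
          (v = em (2 * i - 2) - em (2 * i - 1) ∨ v = em (2 * i - 2) + em (2 * i - 1))) ∨
        v = em (n - 3) + em (n - 2) ∨ v = em (n - 3) - em (n - 1) ∨
        v = em (n - 3) - em (n - 2)}) :
    B ⊆ Φplus ∧ ∀ v ∈ B, ∀ w ∈ B, v + w ∉ Φplus := by
  obtain ⟨m, hm⟩ := hodd
  -- structure lemma
  have hstruct : ∀ v ∈ B, ∃ a b : Fin n, a < b ∧ (v = e a + e b ∨ v = e a - e b) ∧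
      ((∃ i : ℕ, 1 ≤ i ∧ i ≤ k ∧ (a : ℕ) = 2 * i - 2 ∧ (b : ℕ) = 2 * i - 1) ∨
        ((a : ℕ) = n - 3 ∧ ((b : ℕ) = n - 2 ∨ (b : ℕ) = n - 1))) := by
    intro v hv
    rw [hB] at hv
    rcases hv with ⟨i, hi1, hik, hv⟩ | hv | hv | hv
    · have hbn : 2 * i - 1 < n := by omega
      have han : 2 * i - 2 < n := by omega
      refine ⟨⟨2 * i - 2, han⟩, ⟨2 * i - 1, hbn⟩, ?_, ?_, ?_⟩
      · simp [Fin.lt_def]; omega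
      · rw [hem _ han, hem _ hbn] at hv; tauto
      · exact Or.inl ⟨i, hi1, hik, rfl, rfl⟩
    all_goals {
      have h1 : n - 3 < n := by omega
      have h2 : n - 2 < n := by omega
      have h3 : n - 1 < n := by omega
      first
      | (refine ⟨⟨n - 3, h1⟩, ⟨n - 2, h2⟩, ?_, ?_, ?_⟩
         · simp [Fin.lt_def]; omega
         · rw [hem _ h1, hem _ h2] at hv; tauto
         · exact Or.inr ⟨rfl, Or.inl rfl⟩)
      | (refine ⟨⟨n - 3, h1⟩, ⟨n - 1, h3⟩, ?_, ?_, ?_⟩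
         · simp [Fin.lt_def]; omega
         · rw [hem _ h1, hem _ h3] at hv; tauto
         · exact Or.inr ⟨rfl, Or.inr rfl⟩) }
  constructor
  · intro v hv
    obtain ⟨a, b, hab, hform, -⟩ := hstruct v hv
    rw [hΦplus]
    exact ⟨a, b, hab, hform⟩
  · intro v hv w hw hmem
    obtain ⟨a, b, hab, hformv, hidxv⟩ := hstruct v hv
    obtain ⟨c, d, hcd, hformw, hidxw⟩ := hstruct w hw
    rw [hΦplus] at hmem
    obtain ⟨p, q, hpq, hform⟩ := hmem
    have hdisj : a = c ∨ (a ≠ c ∧ a ≠ d ∧ b ≠ c ∧ b ≠ d) := by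
      have hval : (a : ℕ) = (c : ℕ) ∨ ((a:ℕ) ≠ (c:ℕ) ∧ (a:ℕ) ≠ (d:ℕ) ∧
          (b:ℕ) ≠ (c:ℕ) ∧ (b:ℕ) ≠ (d:ℕ)) := by
        rcases hidxv with ⟨i, hi1, hik, ha, hb⟩ | ⟨ha, hb⟩ <;>
          rcases hidxw with ⟨i', hi1', hik', hc, hd⟩ | ⟨hc, hd⟩ <;>
          rcases hb with hb <;> (try rcases hd with hd | hd) <;> omega
      rcases hval with h | ⟨h1, h2, h3, h4⟩
      · exact Or.inl (Fin.ext h)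
      · exact Or.inr ⟨fun hh => h1 (congrArg Fin.val hh), fun hh => h2 (congrArg Fin.val hh),
          fun hh => h3 (congrArg Fin.val hh), fun hh => h4 (congrArg Fin.val hh)⟩
    have hsub : ∀ x y : Fin n, e x - e y =
        EuclideanSpace.single x (1:ℝ) + (-1 : ℝ) • EuclideanSpace.single y 1 := by
      intro x y; rw [he, he]; module
    have hadd : ∀ x y : Fin n, e x + e y =
        EuclideanSpace.single x (1:ℝ) + (1 : ℝ) • EuclideanSpace.single y 1 := by
      intro x y; rw [he, he]; module
    rcases hformv with rfl | rfl <;> rcases hformw with rfl | rfl <;>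
      rcases hform with hform | hform <;>
      simp only [hadd, hsub] at hform <;>
      exact aux13 a b c d p q (Fin.ne_of_lt hpq) (Fin.ne_of_lt hab) (Fin.ne_of_lt hcd)
        _ _ _ (by norm_num) (by norm_num) (by norm_num) hdisj hform
end
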